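/- Let r : [0,T] → L₂(Ω) satisfy r(·,0) = 0, r ∈ L_∞(0,T; L₂(Ω)) ∩ W^{1,∞}(ε,T; L₂(Ω)) for each ε ∈ (0,T]. Then for 0 < α < 1 and each t > 0, ⟨D_t^α r(·,t), r(·,t)⟩ ≥ (D_t^α ‖r(·,t)‖) · ‖r(·,t)‖, where D_t^α is the reformulated Caputo derivative and ⟨·,·⟩, ‖·‖ are the L₂(Ω) inner product and norm. -/

import Mathlib

open MeasureTheory Set intervalIntegral

theorem fractional_norm_inequality_L2
    {H : Type*} [NormedAddCommGroup H] [InnerProductSpace ℝ H] [CompleteSpace H]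
    (T α : ℝ) (hT : 0 < T) (hα0 : 0 < α) (hα1 : α < 1)
    (r : ℝ → H)
    (hr0 : r 0 = 0)
    (hr_bdd : ∃ C : ℝ, ∀ t ∈ Icc (0:ℝ) T, ‖r t‖ ≤ C)
    (hr_lip : ∀ ε : ℝ, 0 < ε → ε ≤ T →
      ∃ C : NNReal, LipschitzOnWith C r (Icc ε T))
    (t : ℝ) (ht : t ∈ Ioc (0:ℝ) T) :
    (inner ℝ ((1 / Real.Gamma (1 - α)) •
        (t ^ (-α) • (r t - r 0)
          + ∫ s in (0:ℝ)..t, (α * (t - s) ^ (-α - 1)) • (r t - r s)))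
      (r t) : ℝ)
    ≥ ((1 / Real.Gamma (1 - α)) *
        (t ^ (-α) * (‖r t‖ - ‖r 0‖)
          + ∫ s in (0:ℝ)..t, α * (t - s) ^ (-α - 1) * (‖r t‖ - ‖r s‖)))
      * ‖r t‖ := by
  obtain ⟨ht0, htT⟩ := ht
  obtain ⟨C, hC⟩ := hr_bdd
  have hΓ : 0 < Real.Gamma (1 - α) := Real.Gamma_pos_of_pos (by linarith)
  have hcΓ : 0 ≤ 1 / Real.Gamma (1 - α) := by positivity
  set k : ℝ → ℝ := fun s => α * (t - s) ^ (-α - 1) with hk_def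
  have hk_meas : Measurable k := by fun_prop
  have hk_nonneg : ∀ s : ℝ, s ≤ t → 0 ≤ k s := fun s hs => by
    have : (0:ℝ) ≤ (t - s) ^ (-α - 1) := Real.rpow_nonneg (by linarith) _
    positivity
  -- continuity of r on Ioc 0 T
  have hcont : ContinuousOn r (Ioc 0 T) := by
    intro s hs
    obtain ⟨L, hL⟩ := hr_lip (s / 2) (by linarith [hs.1]) (by linarith [hs.1, hs.2])
    have h1 : ContinuousWithinAt r (Icc (s / 2) T) s :=
      hL.continuousOn s ⟨by linarith [hs.1], hs.2⟩
    refine h1.mono_of_mem_nhdsWithin ?_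
    refine mem_nhdsWithin.mpr ⟨Ioi (s / 2), isOpen_Ioi, by simpa using by linarith [hs.1], ?_⟩
    rintro u ⟨hu1, hu2⟩
    exact ⟨le_of_lt hu1, hu2.2⟩
  have hrm : AEStronglyMeasurable r (volume.restrict (Ioc 0 t)) :=
    (hcont.mono (Ioc_subset_Ioc_right htT)).aestronglyMeasurable measurableSet_Ioc
  have hdm : AEStronglyMeasurable (fun s => r t - r s) (volume.restrict (Ioc 0 t)) :=
    aestronglyMeasurable_const.sub hrm
  -- the scalar majorant
  set h : ℝ → ℝ := fun s => k s * ‖r t - r s‖ with hh_def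
  have hh_meas : AEStronglyMeasurable h (volume.restrict (Ioc 0 t)) :=
    (hk_meas.aestronglyMeasurable.restrict).mul hdm.norm
  -- integrability of the majorant on Ioc 0 t, by splitting at t/2
  have hsplit : Ioc (0:ℝ) t = Ioc 0 (t / 2) ∪ Ioc (t / 2) t := by
    rw [Ioc_union_Ioc_eq_Ioc] <;> linarith
  have hh_int : IntegrableOn h (Ioc 0 t) := by
    rw [hsplit]
    apply IntegrableOn.union
    · -- bounded part
      refine Integrable.mono' (g := fun _ => α * (t / 2) ^ (-α - 1) * (2 * C))
        (integrableOn_const measure_Ioc_lt_top.ne) (hh_meas.mono_measure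
          (Measure.restrict_mono (Ioc_subset_Ioc_right (by linarith)) le_rfl)) ?_
      refine (ae_restrict_iff' measurableSet_Ioc).mpr (ae_of_all _ fun s hs => ?_)
      have hs2 : t / 2 ≤ t - s := by linarith [hs.2]
      have hb1 : (t - s) ^ (-α - 1) ≤ (t / 2) ^ (-α - 1) :=
        Real.rpow_le_rpow_of_nonpos (by linarith) hs2 (by linarith)
      have hb2 : ‖r t - r s‖ ≤ 2 * C := by
        have h1 : ‖r t‖ ≤ C := hC t ⟨le_of_lt ht0, htT⟩
        have h2 : ‖r s‖ ≤ C := hC s ⟨le_of_lt hs.1, by linarith [hs.2]⟩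
        calc ‖r t - r s‖ ≤ ‖r t‖ + ‖r s‖ := norm_sub_le _ _
          _ ≤ 2 * C := by linarith
      have hk0 : 0 ≤ k s := hk_nonneg s (by linarith [hs.2])
      have hCnn : (0:ℝ) ≤ 2 * C := le_trans (norm_nonneg (r t)) (by
        have := hC t ⟨le_of_lt ht0, htT⟩; linarith [norm_nonneg (r t)])
      calc ‖h s‖ = k s * ‖r t - r s‖ := by
            rw [Real.norm_eq_abs, abs_of_nonneg (mul_nonneg hk0 (norm_nonneg _))]
        _ ≤ (α * (t / 2) ^ (-α - 1)) * (2 * C) := by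
            apply mul_le_mul _ hb2 (norm_nonneg _) _
            · exact mul_le_mul_of_nonneg_left hb1 (le_of_lt hα0)
            · have : (0:ℝ) ≤ (t / 2) ^ (-α - 1) := Real.rpow_nonneg (by linarith) _
              positivity
        _ = α * (t / 2) ^ (-α - 1) * (2 * C) := by ring
    · -- Lipschitz part
      obtain ⟨L, hL⟩ := hr_lip (t / 2) (by linarith) (by linarith)
      have hmaj : IntegrableOn (fun s => (α * L) * (t - s) ^ (-α)) (Ioc (t / 2) t) := by
        have h1 : IntervalIntegrable (fun x : ℝ => x ^ (-α)) volume 0 (t / 2) :=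
          intervalIntegrable_rpow' (by linarith)
        have h2 := (h1.comp_sub_left t).symm
        have he : t - t / 2 = t / 2 := by ring
        rw [sub_zero, he] at h2
        have h3 : IntervalIntegrable (fun x : ℝ => (t - x) ^ (-α)) volume (t / 2) t := h2
        exact ((intervalIntegrable_iff_integrableOn_Ioc_of_le (by linarith)).mp
          h3).const_mul (α * L)
      refine Integrable.mono' hmaj (hh_meas.mono_measure
        (Measure.restrict_mono (Ioc_subset_Ioc_left (by linarith)) le_rfl)) ?_
      refine (ae_restrict_iff' measurableSet_Ioc).mpr (ae_of_all _ fun s hs => ?_)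
      have hk0 : 0 ≤ k s := hk_nonneg s hs.2
      have hnorm : ‖h s‖ = k s * ‖r t - r s‖ := by
        rw [Real.norm_eq_abs, abs_of_nonneg (mul_nonneg hk0 (norm_nonneg _))]
      rcases eq_or_lt_of_le hs.2 with hst | hst
      · rw [hnorm, hst]
        simp only [sub_self, hk_def]
        rw [Real.zero_rpow (by linarith), Real.zero_rpow (by linarith)]
        simp
      · have hlip : ‖r t - r s‖ ≤ L * (t - s) := by
          have := hL.norm_sub_le (x := t) (y := s) ⟨by linarith, htT⟩
            ⟨le_of_lt hs.1, by linarith⟩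
          calc ‖r t - r s‖ ≤ L * |t - s| := this
            _ = L * (t - s) := by rw [abs_of_pos (by linarith)]
        rw [hnorm]
        have hrp : (t - s) ^ (-α - 1) * (t - s) = (t - s) ^ (-α) := by
          rw [← Real.rpow_add_one (by linarith : (0:ℝ) < t - s).ne' (-α - 1)]
          norm_num
        calc k s * ‖r t - r s‖ ≤ k s * (L * (t - s)) :=
              mul_le_mul_of_nonneg_left hlip hk0
          _ = (α * L) * ((t - s) ^ (-α - 1) * (t - s)) := by rw [hk_def]; ring
          _ = (α * L) * (t - s) ^ (-α) := by rw [hrp]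
  -- integrability of vector integrand
  have hf_meas : AEStronglyMeasurable (fun s => k s • (r t - r s))
      (volume.restrict (Ioc 0 t)) := (hk_meas.aestronglyMeasurable.restrict).smul hdm
  have hf_int : IntegrableOn (fun s => k s • (r t - r s)) (Ioc 0 t) := by
    refine Integrable.mono' hh_int hf_meas ?_
    refine (ae_restrict_iff' measurableSet_Ioc).mpr (ae_of_all _ fun s hs => ?_)
    rw [norm_smul, Real.norm_eq_abs, abs_of_nonneg (hk_nonneg s hs.2)]
  -- integrability of scalar integrand
  have hg_int : IntegrableOn (fun s => k s * (‖r t‖ - ‖r s‖)) (Ioc 0 t) := by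
    refine Integrable.mono' hh_int
      ((hk_meas.aestronglyMeasurable.restrict).mul
        (aestronglyMeasurable_const.sub hrm.norm)) ?_
    refine (ae_restrict_iff' measurableSet_Ioc).mpr (ae_of_all _ fun s hs => ?_)
    rw [Real.norm_eq_abs, abs_mul, abs_of_nonneg (hk_nonneg s hs.2)]
    refine mul_le_mul_of_nonneg_left ?_ (hk_nonneg s hs.2)
    exact abs_norm_sub_norm_le _ _
  -- rewrite interval integrals as set integrals
  rw [intervalIntegral.integral_of_le (le_of_lt ht0),
    intervalIntegral.integral_of_le (le_of_lt ht0)]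
  -- expand the inner product
  rw [real_inner_smul_left, inner_add_left, real_inner_smul_left]
  rw [hr0, sub_zero, real_inner_self_eq_norm_sq, norm_zero, sub_zero]
  have hinner_int : (inner ℝ (∫ s in Ioc 0 t, k s • (r t - r s)) (r t) : ℝ)
      = ∫ s in Ioc 0 t, (inner ℝ (k s • (r t - r s)) (r t) : ℝ) := by
    calc (inner ℝ (∫ s in Ioc 0 t, k s • (r t - r s)) (r t) : ℝ)
        = (inner ℝ (r t) (∫ s in Ioc 0 t, k s • (r t - r s)) : ℝ) := real_inner_comm _ _
      _ = ∫ s in Ioc 0 t, (inner ℝ (r t) (k s • (r t - r s)) : ℝ) := (integral_inner hf_int _).symm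
      _ = ∫ s in Ioc 0 t, (inner ℝ (k s • (r t - r s)) (r t) : ℝ) :=
          integral_congr_ae (ae_of_all _ fun s => real_inner_comm _ _)
  rw [hinner_int]
  have hmono : (∫ s in Ioc 0 t, k s * (‖r t‖ - ‖r s‖)) * ‖r t‖
      ≤ ∫ s in Ioc 0 t, (inner ℝ (k s • (r t - r s)) (r t) : ℝ) := by
    rw [← MeasureTheory.integral_mul_const]
    refine setIntegral_mono_on (hg_int.mul_const _) ?_ measurableSet_Ioc ?_
    · have := hf_int
      exact ((innerSL ℝ (r t)).integrable_comp hf_int).congr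
        (ae_of_all _ fun s => real_inner_comm _ _)
    · intro s hs
      rw [real_inner_smul_left]
      have hkey : (‖r t‖ - ‖r s‖) * ‖r t‖ ≤ (inner ℝ (r t - r s) (r t) : ℝ) := by
        rw [inner_sub_left, real_inner_self_eq_norm_sq]
        have h1 : (inner ℝ (r s) (r t) : ℝ) ≤ ‖r s‖ * ‖r t‖ := real_inner_le_norm _ _
        nlinarith [norm_nonneg (r t), norm_nonneg (r s)]
      calc k s * (‖r t‖ - ‖r s‖) * ‖r t‖ = k s * ((‖r t‖ - ‖r s‖) * ‖r t‖) := by ring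
        _ ≤ k s * (inner ℝ (r t - r s) (r t) : ℝ) :=
            mul_le_mul_of_nonneg_left hkey (hk_nonneg s hs.2)
  have htα : (0:ℝ) ≤ t ^ (-α) := Real.rpow_nonneg (le_of_lt ht0) _
  have hrt : (0:ℝ) ≤ ‖r t‖ := norm_nonneg _
  calc (1 / Real.Gamma (1 - α)) *
        (t ^ (-α) * ‖r t‖ + ∫ s in Ioc 0 t, k s * (‖r t‖ - ‖r s‖)) * ‖r t‖
      = (1 / Real.Gamma (1 - α)) *
        (t ^ (-α) * ‖r t‖ ^ 2 + (∫ s in Ioc 0 t, k s * (‖r t‖ - ‖r s‖)) * ‖r t‖) := by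
        ring
    _ ≤ (1 / Real.Gamma (1 - α)) *
        (t ^ (-α) * ‖r t‖ ^ 2 + ∫ s in Ioc 0 t, (inner ℝ (k s • (r t - r s)) (r t) : ℝ)) := by
        apply mul_le_mul_of_nonneg_left _ hcΓ
        linarith [hmono]
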